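/- Let M be a forest (a possibly infinite acyclic simple graph), ā a finite set of vertices with ā ≤ M (i.e., ā is weakly closed in every finite superset of ā inside M), and b a vertex of M with b ∉ ā. Then b ∈ cl*_M(ā) if and only if there is exactly one path p in M from b to ā with the property that p meets ā in exactly one vertex. -/

import Mathlib

open SimpleGraph

/-- The predimension of a finite set `A` of vertices: `|A| - e(A)`, where `e(A)` is the
number of edges of the induced subgraph on `A`. -/
noncomputable def delta {V : Type*} (G : SimpleGraph V) (A : Finset V) : ℤ :=
  (A.card : ℤ) - (Nat.card (G.induce (A : Set V)).edgeSet : ℤ)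

/-- `A` is closed in `B` (`A ≤* B`): `A ⊆ B` and `δ(C) > δ(A)` for every finite `C` with
`A ⊊ C ⊆ B`. -/
def Closed {V : Type*} (G : SimpleGraph V) (A B : Finset V) : Prop :=
  A ⊆ B ∧ ∀ C : Finset V, A ⊂ C → C ⊆ B → delta G A < delta G C

/-- `A` is weakly closed in `B` (`A ≤ B`). -/
def WClosed {V : Type*} (G : SimpleGraph V) (A B : Finset V) : Prop :=
  A ⊆ B ∧ ∀ C : Finset V, A ⊆ C → C ⊆ B → delta G A ≤ delta G C

/-- `A ≤* M` : `A` is closed in every finite superset inside the graph. -/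
def ClosedIn {V : Type*} (G : SimpleGraph V) (A : Finset V) : Prop :=
  ∀ B : Finset V, A ⊆ B → Closed G A B

def WClosedIn {V : Type*} (G : SimpleGraph V) (A : Finset V) : Prop :=
  ∀ B : Finset V, A ⊆ B → WClosed G A B

/-- `(A,B)` is a minimal pair. -/
def MinPair {V : Type*} (G : SimpleGraph V) (A B : Finset V) : Prop :=
  A ⊆ B ∧ (∀ C : Finset V, A ⊆ C → C ⊂ B → Closed G A C) ∧ ¬ Closed G A B

def WMinPair {V : Type*} (G : SimpleGraph V) (A B : Finset V) : Prop :=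
  A ⊆ B ∧ (∀ C : Finset V, A ⊆ C → C ⊂ B → WClosed G A C) ∧ ¬ WClosed G A B

/-- `B` is an intrinsic extension of `A`. -/
def IntrinsicExt {V : Type*} (G : SimpleGraph V) (A B : Finset V) : Prop :=
  A ⊆ B ∧ ∀ C : Finset V, A ⊆ C → C ⊂ B → ¬ Closed G C B

def WIntrinsicExt {V : Type*} (G : SimpleGraph V) (A B : Finset V) : Prop :=
  A ⊆ B ∧ ∀ C : Finset V, A ⊆ C → C ⊂ B → ¬ WClosed G C B

/-- The closure `cl*_M(N)`. -/
def clStar {V : Type*} (G : SimpleGraph V) (N : Set V) : Set V :=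
  {b | ∃ A E : Finset V, (A : Set V) ⊆ N ∧ IntrinsicExt G A E ∧ b ∈ E}

/-- The weak closure `cl_M(N)`. -/
def clWeak {V : Type*} (G : SimpleGraph V) (N : Set V) : Set V :=
  {b | ∃ A E : Finset V, (A : Set V) ⊆ N ∧ WIntrinsicExt G A E ∧ b ∈ E}

namespace Stmt10

variable {V : Type*} (G : SimpleGraph V)

/-- The set of edges of `G` with both endpoints in `C`. -/
def eS (C : Finset V) : Set (Sym2 V) :=
  {e | e ∈ G.edgeSet ∧ ∀ v ∈ e, v ∈ C}

variable {G}

lemma eS_finite (C : Finset V) : (eS G C).Finite :=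
  C.sym2.finite_toSet.subset (fun e he => Finset.mem_sym2_iff.2 he.2)

lemma eS_mono {C D : Finset V} (h : C ⊆ D) : eS G C ⊆ eS G D :=
  fun _ he => ⟨he.1, fun v hv => h (he.2 v hv)⟩

lemma card_edgeSet_induce (C : Finset V) :
    Nat.card (G.induce (C : Set V)).edgeSet = (eS G C).ncard := by
  rw [← Nat.card_coe_set_eq]
  apply Nat.card_eq_of_bijective
    (f := fun e => ⟨Sym2.map Subtype.val e.1, by
      obtain ⟨e, he⟩ := e
      induction e using Sym2.ind with
      | _ x y =>
        rw [SimpleGraph.mem_edgeSet] at he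
        exact ⟨G.mem_edgeSet.2 he, by
          intro v hv
          rw [Sym2.map_pair_eq, Sym2.mem_iff] at hv
          rcases hv with rfl | rfl
          · exact x.2
          · exact y.2⟩⟩)
  constructor
  · rintro ⟨e₁, he₁⟩ ⟨e₂, he₂⟩ h
    simp only [Subtype.mk.injEq] at h ⊢
    exact Sym2.map.injective Subtype.val_injective h
  · rintro ⟨e, he⟩
    obtain ⟨hee, hm⟩ := he
    induction e using Sym2.ind with
    | _ x y =>
      rw [SimpleGraph.mem_edgeSet] at hee
      have hx : x ∈ (C : Set V) := hm x (Sym2.mem_mk_left x y)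
      have hy : y ∈ (C : Set V) := hm y (Sym2.mem_mk_right x y)
      refine ⟨⟨s(⟨x, hx⟩, ⟨y, hy⟩), ((G.induce (C : Set V)).mem_edgeSet).2 (by exact hee)⟩, ?_⟩
      simp [Sym2.map_pair_eq]

lemma delta_eq (C : Finset V) :
    delta G C = (C.card : ℤ) - ((eS G C).ncard : ℤ) := by
  rw [delta, card_edgeSet_induce]


lemma delta_insert_le [DecidableEq V] {C : Finset V} {u v : V} (hu : u ∈ C) (hv : v ∉ C)
    (hadj : G.Adj u v) : delta G (insert v C) ≤ delta G C := by
  have hmem : s(u, v) ∈ eS G (insert v C) :=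
    ⟨G.mem_edgeSet.2 hadj, by
      intro x hx
      rw [Sym2.mem_iff] at hx
      rcases hx with rfl | rfl
      · exact Finset.mem_insert_of_mem hu
      · exact Finset.mem_insert_self _ _⟩
  have hnot : s(u, v) ∉ eS G C := fun h => hv (h.2 v (Sym2.mem_mk_right u v))
  have hsub : insert s(u, v) (eS G C) ⊆ eS G (insert v C) := by
    rw [Set.insert_subset_iff]
    exact ⟨hmem, eS_mono (Finset.subset_insert _ _)⟩
  have h1 : (eS G C).ncard + 1 ≤ (eS G (insert v C)).ncard := by
    have := Set.ncard_le_ncard hsub (eS_finite _)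
    rwa [Set.ncard_insert_of_notMem hnot (eS_finite _)] at this
  have h2 : (insert v C).card = C.card + 1 := Finset.card_insert_of_notMem hv
  rw [delta_eq, delta_eq, h2]
  push_cast
  omega

lemma delta_union [DecidableEq V] {C D : Finset V} (hdisj : Disjoint C D)
    (hcross : ∀ x ∈ C, ∀ y ∈ D, ¬ G.Adj x y) :
    delta G (C ∪ D) = delta G C + delta G D := by
  have hunion : eS G (C ∪ D) = eS G C ∪ eS G D := by
    apply Set.Subset.antisymm
    · rintro e ⟨hee, hm⟩
      induction e using Sym2.ind with
      | _ x y =>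
        rw [SimpleGraph.mem_edgeSet] at hee
        have hx := hm x (Sym2.mem_mk_left x y)
        have hy := hm y (Sym2.mem_mk_right x y)
        rw [Finset.mem_union] at hx hy
        rcases hx with hx | hx
        · rcases hy with hy | hy
          · exact Or.inl ⟨G.mem_edgeSet.2 hee, by
              intro v hv; rw [Sym2.mem_iff] at hv
              rcases hv with rfl | rfl <;> assumption⟩
          · exact absurd hee (hcross x hx y hy)
        · rcases hy with hy | hy
          · exact absurd hee.symm (hcross y hy x hx)
          · exact Or.inr ⟨G.mem_edgeSet.2 hee, by
              intro v hv; rw [Sym2.mem_iff] at hv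
              rcases hv with rfl | rfl <;> assumption⟩
    · exact Set.union_subset (eS_mono Finset.subset_union_left)
        (eS_mono Finset.subset_union_right)
  have hd : Disjoint (eS G C) (eS G D) := by
    rw [Set.disjoint_left]
    rintro e ⟨hee, hmC⟩ ⟨_, hmD⟩
    induction e using Sym2.ind with
    | _ x y =>
      exact (Finset.disjoint_left.1 hdisj) (hmC x (Sym2.mem_mk_left x y))
        (hmD x (Sym2.mem_mk_left x y))
  have hcard : (C ∪ D).card = C.card + D.card := Finset.card_union_of_disjoint hdisj
  rw [delta_eq, delta_eq, delta_eq, hcard, hunion,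
    Set.ncard_union_eq hd (eS_finite _) (eS_finite _)]
  push_cast
  ring


lemma reach_in (C : Set V) :
    ∀ {x y : V} (w : G.Walk x y), (∀ z ∈ w.support, z ∈ C) →
      ∀ (hx : x ∈ C) (hy : y ∈ C), (G.induce C).Reachable ⟨x, hx⟩ ⟨y, hy⟩ := by
  intro x y w
  induction w with
  | nil =>
    intro _ hx hy
    exact Reachable.refl _
  | @cons x c y a w ih =>
    intro h hx hy
    have hc : c ∈ C := h c (by simp [Walk.support_cons])
    have hadj : (G.induce C).Adj ⟨x, hx⟩ ⟨c, hc⟩ := by exact a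
    exact hadj.reachable.trans (ih (fun z hz => h z (by simp [Walk.support_cons, hz])) hc hy)

lemma forest_count (hG : G.IsAcyclic) :
    ∀ n (C : Finset V), C.card = n → C.Nonempty → (eS G C).ncard + 1 ≤ C.card := by
  intro n
  induction n using Nat.strong_induction_on with
  | _ n ih =>
    rintro C rfl hC
    classical
    obtain ⟨v, hv⟩ := hC
    by_cases hconn : ∀ u ∈ C, ∃ w : G.Walk v u, ∀ x ∈ w.support, x ∈ C
    · -- the induced graph is a tree
      haveI : Fintype ((C : Set V) : Type _) := FinsetCoe.fintype C
      haveI : Fintype (G.induce (C : Set V)).edgeSet := Fintype.ofFinite _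
      have hacyc : (G.induce (C : Set V)).IsAcyclic := by
        intro x c hc
        exact hG _ ((Walk.map_isCycle_iff_of_injective
          (f := (SimpleGraph.Embedding.induce (G := G) (C : Set V)).toHom)
          (SimpleGraph.Embedding.induce (G := G) (C : Set V)).injective).2 hc)
      have hvC : v ∈ (C : Set V) := hv
      have hconn' : (G.induce (C : Set V)).Connected := by
        rw [connected_iff]
        refine ⟨?_, ⟨⟨v, hvC⟩⟩⟩
        intro x y
        obtain ⟨wx, hwx⟩ := hconn x.1 x.2
        obtain ⟨wy, hwy⟩ := hconn y.1 y.2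
        have h1 := reach_in (C : Set V) wx hwx hvC x.2
        have h2 := reach_in (C : Set V) wy hwy hvC y.2
        exact h1.symm.trans h2
      have htree : (G.induce (C : Set V)).IsTree := ⟨hconn', hacyc⟩
      have hcard := htree.card_edgeFinset
      have hcc : Fintype.card ((C : Set V) : Type _) = C.card := by simp
      rw [hcc] at hcard
      have h2 : (eS G C).ncard = (G.induce (C : Set V)).edgeFinset.card := by
        rw [← card_edgeSet_induce, edgeFinset_card, Nat.card_eq_fintype_card]
      omega
    · -- split into two pieces with no edges between
      push_neg at hconn
      obtain ⟨u, huC, hu⟩ := hconn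
      set R := C.filter (fun x => ∃ w : G.Walk v x, ∀ z ∈ w.support, z ∈ C) with hR
      have hRC : R ⊆ C := Finset.filter_subset _ _
      have hvR : v ∈ R := Finset.mem_filter.2 ⟨hv, Walk.nil, by simp [hv]⟩
      have huR : u ∉ R := by
        intro h
        obtain ⟨w, hw⟩ := (Finset.mem_filter.1 h).2
        obtain ⟨x, hx, hxC⟩ := hu w
        exact hxC (hw x hx)
      have hcross : ∀ x ∈ R, ∀ y ∈ C \ R, ¬ G.Adj x y := by
        intro x hx y hy hadj
        obtain ⟨w, hw⟩ := (Finset.mem_filter.1 hx).2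
        have hyC : y ∈ C := (Finset.mem_sdiff.1 hy).1
        have : y ∈ R := Finset.mem_filter.2 ⟨hyC, w.concat hadj, by
          intro z hz
          rw [Walk.support_concat, List.mem_append] at hz
          rcases hz with hz | hz
          · exact hw z hz
          · simp at hz; subst hz; exact hyC⟩
        exact (Finset.mem_sdiff.1 hy).2 this
      have hsplit : eS G C ⊆ eS G R ∪ eS G (C \ R) := by
        rintro e ⟨hee, hm⟩
        induction e using Sym2.ind with
        | _ x y =>
          rw [SimpleGraph.mem_edgeSet] at hee
          have hx := hm x (Sym2.mem_mk_left x y)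
          have hy := hm y (Sym2.mem_mk_right x y)
          have key : ∀ a b : V, G.Adj a b → a ∈ R → b ∈ C → b ∈ R := by
            intro a b hab ha hb
            by_contra hbR
            exact hcross a ha b (Finset.mem_sdiff.2 ⟨hb, hbR⟩) hab
          by_cases hxR : x ∈ R
          · have hyR : y ∈ R := key x y hee hxR hy
            exact Or.inl ⟨G.mem_edgeSet.2 hee, by
              intro z hz; rw [Sym2.mem_iff] at hz
              rcases hz with rfl | rfl <;> assumption⟩
          · have hyR : y ∉ R := fun h => hxR (key y x hee.symm h hx)
            exact Or.inr ⟨G.mem_edgeSet.2 hee, by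
              intro z hz; rw [Sym2.mem_iff] at hz
              rcases hz with rfl | rfl <;> exact Finset.mem_sdiff.2 ⟨by assumption, by assumption⟩⟩
      have hle : (eS G C).ncard ≤ (eS G R).ncard + (eS G (C \ R)).ncard :=
        le_trans (Set.ncard_le_ncard hsplit ((eS_finite R).union (eS_finite _)))
          (Set.ncard_union_le _ _)
      have hcards : R.card + (C \ R).card = C.card := by
        have := Finset.card_le_card hRC
        rw [Finset.card_sdiff_of_subset hRC]
        omega
      have hRlt : R.card < C.card := Finset.card_lt_card ⟨hRC, fun h => huR (h huC)⟩
      have hSlt : (C \ R).card < C.card := by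
        have : 1 ≤ R.card := Finset.card_pos.2 ⟨v, hvR⟩
        omega
      have ihR := ih R.card hRlt R rfl ⟨v, hvR⟩
      have ihS := ih (C \ R).card hSlt (C \ R) rfl ⟨u, Finset.mem_sdiff.2 ⟨huC, huR⟩⟩
      omega

lemma one_le_delta (hG : G.IsAcyclic) {C : Finset V} (hC : C.Nonempty) :
    1 ≤ delta G C := by
  have := forest_count hG C.card C rfl hC
  rw [delta_eq]
  push_cast
  omega


lemma boundary {C : Finset V} :
    ∀ {x y : V} (w : G.Walk x y), x ∉ C → y ∈ C →
      ∃ u v, G.Adj u v ∧ u ∈ C ∧ v ∉ C ∧ u ∈ w.support ∧ v ∈ w.support := by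
  intro x y w
  induction w with
  | nil => intro hx hy; exact absurd hy hx
  | @cons x c y a w ih =>
    intro hx hy
    by_cases hc : c ∈ C
    · exact ⟨c, x, a.symm, hc, hx, by simp [Walk.support_cons],
        by simp [Walk.support_cons]⟩
    · obtain ⟨u, v, h1, h2, h3, h4, h5⟩ := ih hc hy
      exact ⟨u, v, h1, h2, h3, by simp [Walk.support_cons, h4],
        by simp [Walk.support_cons, h5]⟩

lemma trunc {A : Finset V} :
    ∀ {x y : V} (w : G.Walk x y), x ∉ A → y ∈ A →
      ∃ (a : V) (w' : G.Walk x a), a ∈ A ∧ ∀ v ∈ w'.support, v ∈ A → v = a := by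
  intro x y w
  induction w with
  | nil => intro hx hy; exact absurd hy hx
  | @cons x c y a w ih =>
    intro hx hy
    by_cases hc : c ∈ A
    · refine ⟨c, Walk.cons a Walk.nil, hc, ?_⟩
      intro v hv hvA
      rw [Walk.support_cons, Walk.support_nil] at hv
      rcases List.mem_cons.1 hv with rfl | hv
      · exact absurd hvA hx
      · simpa using hv
    · obtain ⟨a', w', ha', hw'⟩ := ih hc hy
      refine ⟨a', Walk.cons a w', ha', ?_⟩
      intro v hv hvA
      rw [Walk.support_cons] at hv
      rcases List.mem_cons.1 hv with rfl | hv
      · exact absurd hvA hx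
      · exact hw' v hv hvA


lemma uniq_endpoint (hG : G.IsAcyclic) {A : Finset V}
    (hA : ∀ B : Finset V, A ⊆ B → delta G A ≤ delta G B) {b : V}
    {a₁ a₂ : V} {p₁ : G.Walk b a₁} {p₂ : G.Walk b a₂}
    (ha₁ : a₁ ∈ A) (hp₁ : p₁.IsPath) (hm₁ : ∀ v ∈ p₁.support, v ∈ A → v = a₁)
    (ha₂ : a₂ ∈ A) (hp₂ : p₂.IsPath) (hm₂ : ∀ v ∈ p₂.support, v ∈ A → v = a₂) :
    a₁ = a₂ := by
  classical
  by_contra hne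
  by_cases hadj : G.Adj a₁ a₂
  · have ha₁s : a₁ ∉ p₂.support := fun h => hne (hm₂ a₁ h ha₁)
    have hpath : (Walk.cons hadj p₂.reverse).reverse.IsPath := by
      apply Walk.IsPath.reverse
      rw [Walk.cons_isPath_iff]
      exact ⟨hp₂.reverse, by rwa [Walk.support_reverse, List.mem_reverse]⟩
    have hu := hG.path_unique ⟨p₁, hp₁⟩ ⟨(Walk.cons hadj p₂.reverse).reverse, hpath⟩
    have hval : p₁ = (Walk.cons hadj p₂.reverse).reverse := congrArg Subtype.val hu
    have hmem : a₂ ∈ p₁.support := by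
      rw [hval, Walk.support_reverse, List.mem_reverse, Walk.support_cons]
      exact List.mem_cons_of_mem _ p₂.reverse.start_mem_support
    exact hne (hm₁ a₂ hmem ha₂).symm
  · set r : G.Walk a₁ a₂ := ((p₁.reverse.append p₂).toPath : G.Walk a₁ a₂) with hrdef
    have hrpath : r.IsPath := (p₁.reverse.append p₂).toPath.2
    have hsupp : ∀ v ∈ r.support, v ∈ A → v = a₁ ∨ v = a₂ := by
      intro v hv hvA
      have hv' := Walk.support_toPath_subset _ hv
      rw [Walk.mem_support_append_iff] at hv'
      rcases hv' with h | h
      · exact Or.inl (hm₁ v (by rwa [Walk.support_reverse, List.mem_reverse] at h) hvA)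
      · exact Or.inr (hm₂ v h hvA)
    set n := r.length with hn
    have hn1 : 1 ≤ n := by
      rcases Nat.eq_zero_or_pos n with h | h
      · exact absurd (Walk.eq_of_length_eq_zero h) hne
      · exact h
    set T := r.support.toFinset with hT
    have hTcard : T.card = n + 1 := by
      rw [hT, List.toFinset_card_of_nodup hrpath.support_nodup, Walk.length_support]
    have ha₁T : a₁ ∈ T := by simp [hT, Walk.start_mem_support]
    have ha₂T : a₂ ∈ T := by simp [hT, Walk.end_mem_support]
    have hTA : T \ A = T \ {a₁, a₂} := by
      ext v
      simp only [Finset.mem_sdiff, Finset.mem_insert, Finset.mem_singleton]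
      constructor
      · rintro ⟨hvT, hvA⟩
        refine ⟨hvT, fun h => hvA ?_⟩
        rcases h with rfl | rfl <;> assumption
      · rintro ⟨hvT, hvE⟩
        refine ⟨hvT, fun hvA => hvE ?_⟩
        exact hsupp v (by simpa [hT] using hvT) hvA
    have hpairsub : ({a₁, a₂} : Finset V) ⊆ T := by
      intro x hx
      rcases Finset.mem_insert.1 hx with rfl | hx
      · exact ha₁T
      · rw [Finset.mem_singleton] at hx; subst hx; exact ha₂T
    have hpaircard : ({a₁, a₂} : Finset V).card = 2 := by
      rw [Finset.card_insert_of_notMem (by simpa using hne), Finset.card_singleton]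
    have hTAcard : (T \ A).card = n - 1 := by
      rw [hTA, Finset.card_sdiff_of_subset hpairsub, hpaircard, hTcard]
      omega
    have hUcard : (A ∪ T).card = A.card + (n - 1) := by
      rw [← Finset.union_sdiff_self_eq_union,
        Finset.card_union_of_disjoint Finset.disjoint_sdiff, hTAcard]
    have hmemsup : ∀ e ∈ r.edges, ∀ v ∈ e, v ∈ r.support := by
      intro e he
      induction e using Sym2.ind with
      | _ x y =>
        intro v hv
        rw [Sym2.mem_iff] at hv
        rcases hv with rfl | rfl
        · exact Walk.fst_mem_support_of_mem_edges r he
        · exact Walk.snd_mem_support_of_mem_edges r he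
    have hedges : (↑r.edges.toFinset : Set (Sym2 V)) ⊆ eS G (A ∪ T) := by
      intro e he
      have he' : e ∈ r.edges := by simpa using he
      refine ⟨r.edges_subset_edgeSet he', ?_⟩
      intro v hv
      exact Finset.mem_union_right _ (by simpa [hT] using hmemsup e he' v hv)
    have hdisj : ∀ e ∈ r.edges, e ∉ eS G A := by
      intro e he
      induction e using Sym2.ind with
      | _ x y =>
        rintro ⟨hee, hm⟩
        have hx : x ∈ r.support := Walk.fst_mem_support_of_mem_edges r he
        have hy : y ∈ r.support := Walk.snd_mem_support_of_mem_edges r he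
        have hxe := hsupp x hx (hm x (Sym2.mem_mk_left x y))
        have hye := hsupp y hy (hm y (Sym2.mem_mk_right x y))
        have hadj' : G.Adj x y := G.mem_edgeSet.1 hee
        rcases hxe with rfl | rfl <;> rcases hye with rfl | rfl
        · exact G.loopless.irrefl _ hadj'
        · exact hadj hadj'
        · exact hadj hadj'.symm
        · exact G.loopless.irrefl _ hadj'
    have hsub2 : eS G A ∪ (↑r.edges.toFinset : Set (Sym2 V)) ⊆ eS G (A ∪ T) :=
      Set.union_subset (eS_mono Finset.subset_union_left) hedges
    have hcount : (eS G A).ncard + n ≤ (eS G (A ∪ T)).ncard := by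
      have hre : (↑r.edges.toFinset : Set (Sym2 V)).ncard = n := by
        rw [Set.ncard_coe_finset,
          List.toFinset_card_of_nodup hrpath.isTrail.edges_nodup, Walk.length_edges]
      have hdd : Disjoint (eS G A) (↑r.edges.toFinset : Set (Sym2 V)) := by
        rw [Set.disjoint_left]
        intro e he hemem
        exact hdisj e (by simpa using hemem) he
      have hfin : (↑r.edges.toFinset : Set (Sym2 V)).Finite := r.edges.toFinset.finite_toSet
      have h := Set.ncard_le_ncard hsub2 (eS_finite _)
      rwa [Set.ncard_union_eq hdd (eS_finite _) hfin, hre] at h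
    have hdelta := hA (A ∪ T) Finset.subset_union_left
    rw [delta_eq, delta_eq, hUcard] at hdelta
    push_cast at hdelta
    omega

end Stmt10

/-- Let `M` be a (possibly infinite) forest, `ā` a finite set of vertices
with `ā ≤ M` (weakly closed in every finite superset), and `b ∉ ā`. Then
`b ∈ cl*_M(ā)` iff there is exactly one path `p` in `M` from `b` to `ā` meeting `ā`
in exactly one vertex. -/


theorem stmt_10 {V : Type*} (G : SimpleGraph V) (hG : G.IsAcyclic) (A : Finset V)
    (hA : WClosedIn G A) (b : V) (hb : b ∉ A) :
    b ∈ clStar G (A : Set V) ↔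
      ∃! q : Σ a : V, G.Walk b a,
        q.1 ∈ A ∧ q.2.IsPath ∧ ∀ v ∈ q.2.support, v ∈ A → v = q.1 := by
  classical
  have hAle : ∀ B : Finset V, A ⊆ B → delta G A ≤ delta G B := fun B hAB =>
    (hA B hAB).2 B hAB (Finset.Subset.refl B)
  constructor
  · rintro ⟨A₀, E, hsub, ⟨hA₀E, hIE⟩, hbE⟩
    set R := E.filter (fun v => ∃ a ∈ A₀, G.Reachable a v) with hRdef
    have hAR : A₀ ⊆ R := fun a ha =>
      Finset.mem_filter.2 ⟨hA₀E ha, a, ha, Reachable.refl a⟩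
    have hbR : b ∈ R := by
      by_contra hbR
      have hRE : R ⊂ E := ⟨Finset.filter_subset _ _, fun h => hbR (h hbE)⟩
      refine hIE R hAR hRE ⟨hRE.subset, ?_⟩
      intro D hRD hDE
      have hcross : ∀ x ∈ R, ∀ y ∈ D \ R, ¬ G.Adj x y := by
        intro x hx y hy hadj
        obtain ⟨hxE, a, haA₀, hre⟩ := Finset.mem_filter.1 hx
        have hyR : y ∈ R := Finset.mem_filter.2
          ⟨hDE (Finset.mem_sdiff.1 hy).1, a, haA₀, hre.trans hadj.reachable⟩
        exact (Finset.mem_sdiff.1 hy).2 hyR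
      obtain ⟨z, hzD, hzR⟩ := Finset.exists_of_ssubset hRD
      have h1 : 1 ≤ delta G (D \ R) :=
        Stmt10.one_le_delta hG ⟨z, Finset.mem_sdiff.2 ⟨hzD, hzR⟩⟩
      have h2 := Stmt10.delta_union (G := G) Finset.disjoint_sdiff hcross
      rw [Finset.union_sdiff_of_subset hRD.subset] at h2
      linarith
    obtain ⟨hbE', a, haA₀, hre⟩ := Finset.mem_filter.1 hbR
    obtain ⟨w⟩ := hre.symm
    have haA : a ∈ A := hsub haA₀
    obtain ⟨a', w', ha', hw'⟩ := Stmt10.trunc w hb haA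
    have hmeet' : ∀ v ∈ (w'.toPath : G.Walk b a').support, v ∈ A → v = a' :=
      fun v hv hvA => hw' v (Walk.support_toPath_subset _ hv) hvA
    refine ⟨⟨a', (w'.toPath : G.Walk b a')⟩, ⟨ha', w'.toPath.2, hmeet'⟩, ?_⟩
    rintro ⟨a₂, p₂⟩ ⟨ha₂, hp₂, hm₂⟩
    have heq : a₂ = a' :=
      Stmt10.uniq_endpoint hG hAle ha₂ hp₂ hm₂ ha' w'.toPath.2 hmeet'
    subst heq
    have hpe : p₂ = (w'.toPath : G.Walk b a₂) :=
      congrArg Subtype.val (hG.path_unique ⟨p₂, hp₂⟩ w'.toPath)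
    exact Sigma.ext rfl (heq_of_eq hpe)
  · rintro ⟨⟨a, p⟩, ⟨haA, hp, hmeet⟩, -⟩
    refine ⟨{a}, p.support.toFinset, ?_, ⟨?_, ?_⟩, by simp [Walk.start_mem_support]⟩
    · rw [Finset.coe_singleton]
      exact Set.singleton_subset_iff.2 (by simpa using haA)
    · intro x hx
      rw [Finset.mem_singleton] at hx
      subst hx
      simp [Walk.end_mem_support]
    · intro C haC hCE hClosed
      obtain ⟨z, hzE, hzC⟩ := Finset.exists_of_ssubset hCE
      have hz : z ∈ p.support := by simpa using hzE
      have haC' : a ∈ C := haC (Finset.mem_singleton_self a)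
      obtain ⟨u, v, h1, h2, h3, h4, h5⟩ := Stmt10.boundary (p.dropUntil z hz) hzC haC'
      have hvE : v ∈ p.support.toFinset := by
        simp only [List.mem_toFinset]
        exact Walk.support_dropUntil_subset p hz h5
      have hlt := hClosed.2 (insert v C) (Finset.ssubset_insert h3)
        (Finset.insert_subset hvE hCE.subset)
      have hle := Stmt10.delta_insert_le h2 h3 h1
      linarith
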